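/- Let T₊ ∈ ℍ^{N×N} with T₊* = −T₊, let J ∈ ℍ^{n×n} with J* = −J and J² = −I_n, let C ∈ ℍ^{n×N}, and define T₋ = T₊ + C* J C (so that T₊ − T₋ = −C* J C). Then for all real x, y > 0: (i) the matrices xI_N − T₊ and xI_N − T₋ are invertible; (ii) setting Φ(x) = J + C (xI_N − T₊)⁻¹ C*, one has Φ(x) + Φ(y)* = (x + y) · C (xI_N − T₊)⁻¹ ((yI_N − T₊)⁻¹)* C*; and (iii) Φ(x) is invertible with Φ(x)⁻¹ = −J − J C (xI_N − T₋)⁻¹ C* J. -/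

import Mathlib

local notation "ℍ" => Quaternion ℝ

open Matrix


-- unit from left inverse plus injectivity of left multiplication
lemma isUnit_of_mulLeft_injective {N : ℕ} (S : Matrix (Fin N) (Fin N) ℍ)
    (hz : ∀ M : Matrix (Fin N) (Fin N) ℍ, S * M = 0 → M = 0) : IsUnit S := by
  have hinj : Function.Injective (LinearMap.mulLeft ℝ S) := by
    intro M M' h
    have : S * (M - M') = 0 := by
      rw [mul_sub, sub_eq_zero]
      simpa [LinearMap.mulLeft_apply] using h
    have := hz _ this
    exact sub_eq_zero.mp this
  have hsurj := (LinearMap.injective_iff_surjective).mp hinj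
  obtain ⟨B, hB⟩ := hsurj 1
  rw [LinearMap.mulLeft_apply] at hB
  have hBS : B * S = 1 := by
    have h0 : S * (B * S - 1) = 0 := by
      rw [mul_sub, ← mul_assoc, hB, one_mul, mul_one, sub_self]
    have := hz _ h0
    exact sub_eq_zero.mp this
  exact isUnit_iff_exists.mpr ⟨B, hB, hBS⟩

lemma stardot {N : ℕ} (v : Fin N → ℍ) :
    star v ⬝ᵥ v = ((∑ i, Quaternion.normSq (v i) : ℝ) : ℍ) := by
  simp only [dotProduct, Pi.star_apply, Quaternion.star_mul_self]

  exact (map_sum (algebraMap ℝ ℍ) _ _).symm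

lemma isUnit_smul_one_sub_anti {N : ℕ} (x : ℝ) (hx : 0 < x)
    (T : Matrix (Fin N) (Fin N) ℍ) (hT : Tᴴ = -T) :
    IsUnit (x • (1 : Matrix (Fin N) (Fin N) ℍ) - T) := by
  set S : Matrix (Fin N) (Fin N) ℍ := (x • 1 - T) * (x • 1 + T) with hSdef
  have hexp : S = (x * x) • (1 : Matrix (Fin N) (Fin N) ℍ) + Tᴴ * T := by
    rw [hSdef, hT]
    simp only [sub_mul, mul_add, mul_sub, add_mul, smul_mul_assoc, mul_smul_comm,
      one_mul, mul_one, smul_smul, neg_mul]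
    module
  -- injectivity of mulVec
  have hvinj : ∀ v : Fin N → ℍ, S *ᵥ v = 0 → v = 0 := by
    intro v hv
    have hdot : star v ⬝ᵥ (S *ᵥ v) = 0 := by rw [hv, dotProduct_zero]
    rw [hexp, add_mulVec, smul_mulVec, one_mulVec, ← mulVec_mulVec,
      dotProduct_add, dotProduct_smul, dotProduct_mulVec, ← star_mulVec] at hdot
    rw [stardot, stardot] at hdot
    have hre : x * x * (∑ i, Quaternion.normSq (v i))
        + (∑ i, Quaternion.normSq ((T *ᵥ v) i)) = 0 := by
      have := congrArg QuaternionAlgebra.re hdot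
      simpa [Quaternion.re_smul, smul_eq_mul, Quaternion.re_zero] using this
    have h1 : (0:ℝ) ≤ ∑ i, Quaternion.normSq (v i) :=
      Finset.sum_nonneg fun i _ => Quaternion.normSq_nonneg
    have h2 : (0:ℝ) ≤ ∑ i, Quaternion.normSq ((T *ᵥ v) i) :=
      Finset.sum_nonneg fun i _ => Quaternion.normSq_nonneg
    have hxx : 0 < x * x := mul_pos hx hx
    have hA : (∑ i, Quaternion.normSq (v i)) ≤ 0 := by nlinarith
    have hsum0 : ∑ i, Quaternion.normSq (v i) = 0 := le_antisymm hA h1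
    funext i
    have := (Finset.sum_eq_zero_iff_of_nonneg
      (fun i _ => Quaternion.normSq_nonneg)).mp hsum0 i (Finset.mem_univ i)
    simpa using Quaternion.normSq_eq_zero.mp this
  -- S is a unit
  have hSunit : IsUnit S := by
    apply isUnit_of_mulLeft_injective
    intro M hM
    apply Matrix.ext
    intro i j
    have hcol : S *ᵥ (fun k => M k j) = 0 := by
      funext i'
      have := congrFun (congrFun hM i') j
      simpa [mulVec, dotProduct, mul_apply] using this
    simpa using congrFun (hvinj _ hcol) i
  -- conclude
  obtain ⟨B, hSB, hBS⟩ := isUnit_iff_exists.mp hSunit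
  have hcomm : (x • 1 - T) * (x • 1 + T) = (x • 1 + T) * (x • 1 - T) := by
    simp only [sub_mul, mul_add, mul_sub, add_mul, smul_mul_assoc, mul_smul_comm,
      one_mul, mul_one, smul_smul]
    module
  have hBcomm : B * (x • 1 - T) = (x • 1 - T) * B := by
    have hSc : S * (x • 1 - T) = (x • 1 - T) * S := by
      rw [hSdef, mul_assoc, ← hcomm, ← mul_assoc]
    calc B * (x • 1 - T) = B * (x • 1 - T) * (S * B) := by rw [hSB, mul_one]
      _ = B * ((x • 1 - T) * S) * B := by noncomm_ring
      _ = B * (S * (x • 1 - T)) * B := by rw [hSc]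
      _ = (B * S) * ((x • 1 - T) * B) := by noncomm_ring
      _ = (x • 1 - T) * B := by rw [hBS, one_mul]
  refine isUnit_iff_exists.mpr ⟨(x • 1 + T) * B, ?_, ?_⟩
  · rw [← mul_assoc, ← hSdef, hSB]
  · calc (x • 1 + T) * B * (x • 1 - T) = (x • 1 + T) * (B * (x • 1 - T)) := by rw [mul_assoc]
      _ = (x • 1 + T) * ((x • 1 - T) * B) := by rw [hBcomm]
      _ = ((x • 1 + T) * (x • 1 - T)) * B := by rw [mul_assoc]
      _ = S * B := by rw [hSdef, hcomm]
      _ = 1 := hSB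

instance : StarModule ℝ ℍ :=
  ⟨fun r a => by rw [Quaternion.star_smul, star_trivial r]⟩

lemma inv_formula_left {n N : ℕ} (J : Matrix (Fin n) (Fin n) ℍ)
    (C : Matrix (Fin n) (Fin N) ℍ) (rA rB : Matrix (Fin N) (Fin N) ℍ)
    (hJ2 : J * J = -1) (hkey : rA * (Cᴴ * J * C) * rB = rB - rA) :
    (J + C * rA * Cᴴ) * (-J - J * C * rB * Cᴴ * J) = 1 := by
  have expand : (J + C * rA * Cᴴ) * (-J - J * C * rB * Cᴴ * J)
      = -(J * J) - J * (J * (C * (rB * (Cᴴ * J)))) - C * (rA * (Cᴴ * J))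
        - C * (rA * (Cᴴ * (J * (C * (rB * (Cᴴ * J)))))) := by
    simp only [Matrix.add_mul, Matrix.mul_sub, Matrix.mul_neg, Matrix.mul_assoc]
    abel
  have hJJ : J * (J * (C * (rB * (Cᴴ * J)))) = -(C * (rB * (Cᴴ * J))) := by
    rw [← Matrix.mul_assoc, hJ2, Matrix.neg_mul, Matrix.one_mul]
  have hkey' : rA * (Cᴴ * (J * (C * (rB * (Cᴴ * J))))) = (rB - rA) * (Cᴴ * J) := by
    have := congrArg (fun M => M * (Cᴴ * J)) hkey
    simpa only [Matrix.mul_assoc] using this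
  rw [expand, hJJ, hkey', hJ2]
  simp only [Matrix.sub_mul, Matrix.mul_sub, neg_neg, sub_neg_eq_add]
  abel

lemma inv_formula_right {n N : ℕ} (J : Matrix (Fin n) (Fin n) ℍ)
    (C : Matrix (Fin n) (Fin N) ℍ) (rA rB : Matrix (Fin N) (Fin N) ℍ)
    (hJ2 : J * J = -1) (hkey : rB * (Cᴴ * J * C) * rA = rB - rA) :
    (-J - J * C * rB * Cᴴ * J) * (J + C * rA * Cᴴ) = 1 := by
  have expand : (-J - J * C * rB * Cᴴ * J) * (J + C * rA * Cᴴ)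
      = -(J * J) - J * (C * (rA * Cᴴ)) - J * (C * (rB * (Cᴴ * (J * J))))
        - J * (C * (rB * (Cᴴ * (J * (C * (rA * Cᴴ)))))) := by
    simp only [Matrix.add_mul, Matrix.sub_mul, Matrix.mul_add, Matrix.neg_mul,
      Matrix.mul_assoc]
    abel
  have hkey' : rB * (Cᴴ * (J * (C * (rA * Cᴴ)))) = (rB - rA) * Cᴴ := by
    have := congrArg (fun M => M * Cᴴ) hkey
    simpa only [Matrix.mul_assoc] using this
  rw [expand, hkey', hJ2]
  simp only [Matrix.sub_mul, Matrix.mul_sub, Matrix.mul_neg, Matrix.mul_one, neg_neg,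
    sub_neg_eq_add]
  abel

/-- `Φ(x) = J + C (xI − T₊)⁻¹ C*`, the positive function associated with the pair of
anti-self-adjoint operators `(T₊, T₋)`, at a real point `x`. -/
noncomputable def Phi {N n : ℕ} (Tp : Matrix (Fin N) (Fin N) ℍ)
    (C : Matrix (Fin n) (Fin N) ℍ) (J : Matrix (Fin n) (Fin n) ℍ) (x : ℝ) :
    Matrix (Fin n) (Fin n) ℍ :=
  J + C * Ring.inverse (x • 1 - Tp) * Cᴴ

/-- For an anti-self-adjoint `T₊`, a signature-type matrix `J` with `J* = −J`, `J² = −I`,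
and `T₋ = T₊ + C* J C` (so `T₊ − T₋ = −C* J C`): for all real `x, y > 0` the matrices
`xI − T₊` and `xI − T₋` are invertible, the function `Φ(x) = J + C (xI − T₊)⁻¹ C*`
satisfies `Φ(x) + Φ(y)* = (x + y) C (xI − T₊)⁻¹ ((yI − T₊)⁻¹)* C*`, and `Φ(x)` is
invertible with `Φ(x)⁻¹ = −J − J C (xI − T₋)⁻¹ C* J`. -/
theorem positive_function_of_antiselfadjoint_pair
    {N n : ℕ} (Tp : Matrix (Fin N) (Fin N) ℍ)
    (hTp : Tpᴴ = -Tp)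
    (J : Matrix (Fin n) (Fin n) ℍ) (hJ : Jᴴ = -J) (hJ2 : J * J = -1)
    (C : Matrix (Fin n) (Fin N) ℍ) :
    ∀ x y : ℝ, 0 < x → 0 < y →
      (IsUnit (x • (1 : Matrix (Fin N) (Fin N) ℍ) - Tp) ∧
        IsUnit (x • (1 : Matrix (Fin N) (Fin N) ℍ) - (Tp + Cᴴ * J * C))) ∧
      (Phi Tp C J x + (Phi Tp C J y)ᴴ
        = (x + y) • (C * Ring.inverse (x • 1 - Tp) * (Ring.inverse (y • 1 - Tp))ᴴ * Cᴴ)) ∧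
      (Phi Tp C J x * (-J - J * C * Ring.inverse (x • 1 - (Tp + Cᴴ * J * C)) * Cᴴ * J) = 1 ∧
        (-J - J * C * Ring.inverse (x • 1 - (Tp + Cᴴ * J * C)) * Cᴴ * J) * Phi Tp C J x = 1) := by
  intro x y hx hy
  have hTmA : (Tp + Cᴴ * J * C)ᴴ = -(Tp + Cᴴ * J * C) := by
    simp only [conjTranspose_add, conjTranspose_mul, conjTranspose_conjTranspose, hTp, hJ,
      Matrix.neg_mul, Matrix.mul_neg, Matrix.mul_assoc]
    abel
  have hux := isUnit_smul_one_sub_anti x hx Tp hTp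
  have huy := isUnit_smul_one_sub_anti y hy Tp hTp
  have humx := isUnit_smul_one_sub_anti x hx _ hTmA
  set rx := Ring.inverse (x • (1 : Matrix (Fin N) (Fin N) ℍ) - Tp) with hrx
  set ry := Ring.inverse (y • (1 : Matrix (Fin N) (Fin N) ℍ) - Tp) with hry
  set rB := Ring.inverse (x • (1 : Matrix (Fin N) (Fin N) ℍ) - (Tp + Cᴴ * J * C)) with hrB
  have hrx1 : (x • 1 - Tp) * rx = 1 := Ring.mul_inverse_cancel _ hux
  have hrx2 : rx * (x • 1 - Tp) = 1 := Ring.inverse_mul_cancel _ hux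
  have hry1 : (y • 1 - Tp) * ry = 1 := Ring.mul_inverse_cancel _ huy
  have hry2 : ry * (y • 1 - Tp) = 1 := Ring.inverse_mul_cancel _ huy
  have hrB1 : (x • 1 - (Tp + Cᴴ * J * C)) * rB = 1 := Ring.mul_inverse_cancel _ humx
  have hrB2 : rB * (x • 1 - (Tp + Cᴴ * J * C)) = 1 := Ring.inverse_mul_cancel _ humx
  refine ⟨⟨hux, humx⟩, ?_, ?_, ?_⟩
  · -- identity (ii)
    have hconjsub : (y • (1 : Matrix (Fin N) (Fin N) ℍ) - Tp)ᴴ = y • 1 + Tp := by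
      rw [conjTranspose_sub, conjTranspose_smul, conjTranspose_one, hTp, sub_neg_eq_add,
        star_trivial]
    have hs1 : (y • 1 + Tp) * ryᴴ = 1 := by
      have := congrArg conjTranspose hry2
      rwa [conjTranspose_mul, conjTranspose_one, hconjsub] at this
    have hsum : rx + ryᴴ = (x + y) • (rx * ryᴴ) := by
      have h1 : rx * ((y • 1 + Tp + (x • 1 - Tp)) * ryᴴ) = rx + ryᴴ := by
        rw [Matrix.add_mul, Matrix.mul_add, hs1, ← Matrix.mul_assoc, hrx2, Matrix.mul_one,
          Matrix.one_mul]
      have h2 : (y • 1 + Tp + (x • 1 - Tp)) = (x + y) • (1 : Matrix (Fin N) (Fin N) ℍ) := by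
        rw [add_smul]; abel
      rw [h2] at h1
      rw [← h1, Matrix.smul_mul, Matrix.one_mul, Matrix.mul_smul]
    simp only [Phi, ← hrx, ← hry]
    rw [conjTranspose_add, conjTranspose_mul, conjTranspose_mul, conjTranspose_conjTranspose,
      hJ]
    have e : J + C * rx * Cᴴ + (-J + C * (ryᴴ * Cᴴ)) = C * (rx + ryᴴ) * Cᴴ := by
      simp only [Matrix.mul_add, Matrix.add_mul, Matrix.mul_assoc]
      abel
    rw [e, hsum, Matrix.mul_smul, Matrix.smul_mul]
    congr 1
    simp only [Matrix.mul_assoc]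
  · -- Φ(x) * G = 1
    have hkey : rx * (Cᴴ * J * C) * rB = rB - rx := by
      have hd : rx * ((x • 1 - Tp) - (x • 1 - (Tp + Cᴴ * J * C))) * rB
          = rx * (x • 1 - Tp) * rB - rx * ((x • 1 - (Tp + Cᴴ * J * C)) * rB) := by
        simp only [Matrix.mul_sub, Matrix.sub_mul, Matrix.mul_assoc]
      rw [hrx2, hrB1, Matrix.one_mul, Matrix.mul_one] at hd
      have hd2 : (x • (1 : Matrix (Fin N) (Fin N) ℍ) - Tp)
          - (x • 1 - (Tp + Cᴴ * J * C)) = Cᴴ * J * C := by abel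
      rwa [hd2] at hd
    simp only [Phi, ← hrx, ← hrB]
    exact inv_formula_left J C rx rB hJ2 hkey
  · -- G * Φ(x) = 1
    have hkey : rB * (Cᴴ * J * C) * rx = rB - rx := by
      have hd : rB * ((x • 1 - Tp) - (x • 1 - (Tp + Cᴴ * J * C))) * rx
          = rB * ((x • 1 - Tp) * rx) - rB * (x • 1 - (Tp + Cᴴ * J * C)) * rx := by
        simp only [Matrix.mul_sub, Matrix.sub_mul, Matrix.mul_assoc]
      rw [hrx1, hrB2, Matrix.mul_one, Matrix.one_mul] at hd
      have hd2 : (x • (1 : Matrix (Fin N) (Fin N) ℍ) - Tp)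
          - (x • 1 - (Tp + Cᴴ * J * C)) = Cᴴ * J * C := by abel
      rwa [hd2] at hd
    simp only [Phi, ← hrx, ← hrB]
    exact inv_formula_right J C rx rB hJ2 hkey
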